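/- For D > 1, the family of functions Û_{x₀,λ}(s,t) = 2 log( λ(x² + (y+1)²) / ((x - x₀)² + (y + Dλ)² - λ²) ), where (x,y) = I⁻¹(s,t) = (2s/(s² + (t+1)²), (1 - s² - t²)/(s² + (t+1)²)), solves -Δ Û = -2 e^{Û} in the open unit disk B² and ∂_ν Û + 2 = 2D e^{Û/2} on S¹. -/

import Mathlib

open Real Finset

/-- Euclidean Laplacian on the plane: sum of second derivatives in coordinate directions. -/
noncomputable def lap (f : EuclideanSpace ℝ (Fin 2) → ℝ) (x : EuclideanSpace ℝ (Fin 2)) : ℝ :=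
  ∑ i : Fin 2, fderiv ℝ (fun y => fderiv ℝ f y (EuclideanSpace.single i 1)) x
    (EuclideanSpace.single i 1)

/-- First component of the inverse Riemann map `(x,y) = I⁻¹(s,t)`. -/
noncomputable def Xc (p : EuclideanSpace ℝ (Fin 2)) : ℝ :=
  2 * p 0 / (p 0 ^ 2 + (p 1 + 1) ^ 2)

/-- Second component of the inverse Riemann map `(x,y) = I⁻¹(s,t)`. -/
noncomputable def Yc (p : EuclideanSpace ℝ (Fin 2)) : ℝ :=
  (1 - p 0 ^ 2 - p 1 ^ 2) / (p 0 ^ 2 + (p 1 + 1) ^ 2)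

/-- The bubble on the disk:
`Û(s,t) = 2 log(λ(x² + (y+1)²)/((x-x₀)² + (y+Dλ)² - λ²))` with `(x,y) = I⁻¹(s,t)`. -/
noncomputable def diskBubble (D l x₀ : ℝ) (p : EuclideanSpace ℝ (Fin 2)) : ℝ :=
  2 * Real.log (l * (Xc p ^ 2 + (Yc p + 1) ^ 2) /
    ((Xc p - x₀) ^ 2 + (Yc p + D * l) ^ 2 - l ^ 2))

namespace DiskAux

noncomputable section

abbrev E2 := EuclideanSpace ℝ (Fin 2)

/-- coordinate projections as continuous linear maps -/
def PR (i : Fin 2) : E2 →L[ℝ] ℝ := EuclideanSpace.proj i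

def dd (p : E2) : ℝ := p 0 ^ 2 + (p 1 + 1) ^ 2

def uu (x₀ : ℝ) (p : E2) : ℝ := 2 * p 0 - x₀ * dd p

def ww (D l : ℝ) (p : E2) : ℝ := 1 - p 0 ^ 2 - p 1 ^ 2 + D * l * dd p

def QQ (D l x₀ : ℝ) (p : E2) : ℝ := uu x₀ p ^ 2 + ww D l p ^ 2 - l ^ 2 * dd p ^ 2

def Q1 (D l x₀ : ℝ) (p : E2) : ℝ :=
  2 * uu x₀ p * (2 - 2 * x₀ * p 0) + 4 * (D * l - 1) * ww D l p * p 0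
    - 4 * l ^ 2 * dd p * p 0

def Q2 (D l x₀ : ℝ) (p : E2) : ℝ :=
  -(4 * x₀) * (p 1 + 1) * uu x₀ p + 2 * ww D l p * (2 * D * l * (p 1 + 1) - 2 * p 1)
    - 4 * l ^ 2 * dd p * (p 1 + 1)

def Q11 (D l x₀ : ℝ) (p : E2) : ℝ :=
  2 * (2 - 2 * x₀ * p 0) * (2 - 2 * x₀ * p 0) + 2 * uu x₀ p * (-2 * x₀)
    + 4 * (D * l - 1) * (2 * p 0 * (D * l - 1) * p 0 + ww D l p)
    - 4 * l ^ 2 * (2 * p 0 * p 0 + dd p)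

def Q12 (D l x₀ : ℝ) (p : E2) : ℝ :=
  2 * (-2 * x₀ * (p 1 + 1)) * (2 - 2 * x₀ * p 0)
    + 4 * (D * l - 1) * (2 * D * l * (p 1 + 1) - 2 * p 1) * p 0
    - 8 * l ^ 2 * (p 1 + 1) * p 0

def Q22 (D l x₀ : ℝ) (p : E2) : ℝ :=
  -4 * x₀ * uu x₀ p + (-4 * x₀ * (p 1 + 1)) * (-2 * x₀ * (p 1 + 1))
    + 2 * (2 * D * l * (p 1 + 1) - 2 * p 1) * (2 * D * l * (p 1 + 1) - 2 * p 1)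
    + 2 * ww D l p * (2 * D * l - 2)
    - 4 * l ^ 2 * (2 * (p 1 + 1) ^ 2 + dd p)

def C1 (D l x₀ : ℝ) (p : E2) : ℝ := 4 * p 0 / dd p - 2 * Q1 D l x₀ p / QQ D l x₀ p

def C2 (D l x₀ : ℝ) (p : E2) : ℝ :=
  4 * (p 1 + 1) / dd p - 2 * Q2 D l x₀ p / QQ D l x₀ p

def VV (D l x₀ : ℝ) (p : E2) : ℝ :=
  2 * Real.log (4 * l * dd p) - 2 * Real.log (QQ D l x₀ p)

lemma derivCongr {f : E2 → ℝ} {L L' : E2 →L[ℝ] ℝ} {p : E2} (h : HasFDerivAt f L p)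
    (e : ∀ v, L v = L' v) : HasFDerivAt f L' p := by
  have : L = L' := ContinuousLinearMap.ext e
  rwa [this] at h

lemma hasF_coord (i : Fin 2) (p : E2) : HasFDerivAt (fun q : E2 => q i) (PR i) p := by
  have h := (EuclideanSpace.proj (𝕜 := ℝ) (ι := Fin 2) i).hasFDerivAt (x := p)
  have e : ⇑(EuclideanSpace.proj (𝕜 := ℝ) (ι := Fin 2) i) = fun q : E2 => q i := by
    funext q; simp
  rw [PR]; rwa [e] at h

lemma hasF_sq {f : E2 → ℝ} {f' : E2 →L[ℝ] ℝ} {p : E2} (h : HasFDerivAt f f' p) :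
    HasFDerivAt (fun q : E2 => f q ^ 2) ((2 * f p) • f') p := by
  have h2 : HasFDerivAt (fun q : E2 => f q * f q) (f p • f' + f p • f') p := h.mul h
  convert h2 using 1
  · funext q; ring
  · ext v; simp; ring

lemma hasF_div {f g : E2 → ℝ} {f' g' : E2 →L[ℝ] ℝ} {p : E2} (hf : HasFDerivAt f f' p)
    (hg : HasFDerivAt g g' p) (h : g p ≠ 0) :
    HasFDerivAt (fun q : E2 => f q / g q)
      (((g p)⁻¹ ^ 2) • ((g p) • f' - (f p) • g')) p := by
  have hinv : HasFDerivAt (fun q : E2 => (g q)⁻¹) ((-(g p ^ 2)⁻¹) • g') p :=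
    (hasDerivAt_inv h).comp_hasFDerivAt p hg
  have h3 : HasFDerivAt (fun y : E2 => f y * (g y)⁻¹) _ p := hf.mul hinv
  have h4 : (fun y : E2 => f y * (g y)⁻¹) = fun q : E2 => f q / g q := by
    funext q; rw [div_eq_mul_inv]
  rw [h4] at h3
  exact derivCongr h3 (fun v => by
    simp only [ContinuousLinearMap.smul_apply, ContinuousLinearMap.sub_apply,
      ContinuousLinearMap.add_apply, smul_eq_mul]
    field_simp
    ring)

lemma hasF_dd (p : E2) :
    HasFDerivAt dd ((2 * p 0) • PR 0 + (2 * (p 1 + 1)) • PR 1) p := by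
  have h0 := hasF_coord 0 p
  have h1 := hasF_coord 1 p
  have h := (hasF_sq h0).add (hasF_sq (h1.add_const 1))
  exact derivCongr h (fun v => by simp; try ring)

lemma hasF_uu (x₀ : ℝ) (p : E2) :
    HasFDerivAt (uu x₀)
      ((2 - 2 * x₀ * p 0) • PR 0 + (-(2 * x₀ * (p 1 + 1))) • PR 1) p := by
  have h0 := hasF_coord 0 p
  have h := (h0.const_mul 2).sub ((hasF_dd p).const_mul x₀)
  exact derivCongr h (fun v => by simp; try ring)

lemma hasF_ww (D l : ℝ) (p : E2) :
    HasFDerivAt (ww D l)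
      ((2 * p 0 * (D * l - 1)) • PR 0 + (2 * D * l * (p 1 + 1) - 2 * p 1) • PR 1) p := by
  have h0 := hasF_coord 0 p
  have h1 := hasF_coord 1 p
  have h := (((hasFDerivAt_const (1 : ℝ) p).sub (hasF_sq h0)).sub (hasF_sq h1)).add
    ((hasF_dd p).const_mul (D * l))
  exact derivCongr h (fun v => by simp; try ring)

lemma hasF_QQ (D l x₀ : ℝ) (p : E2) :
    HasFDerivAt (QQ D l x₀) ((Q1 D l x₀ p) • PR 0 + (Q2 D l x₀ p) • PR 1) p := by
  have h := ((hasF_sq (hasF_uu x₀ p)).add (hasF_sq (hasF_ww D l p))).sub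
    ((hasF_sq (hasF_dd p)).const_mul (l ^ 2))
  exact derivCongr h (fun v => by
    simp [Q1, Q2, uu, ww, dd]; try ring)

lemma hasF_Q1 (D l x₀ : ℝ) (p : E2) :
    HasFDerivAt (Q1 D l x₀) ((Q11 D l x₀ p) • PR 0 + (Q12 D l x₀ p) • PR 1) p := by
  have h0 := hasF_coord 0 p
  have h1 := hasF_coord 1 p
  have hv : HasFDerivAt (fun q : E2 => 2 - 2 * x₀ * q 0) ((-(2 * x₀)) • PR 0) p := by
    have h := (hasFDerivAt_const (2 : ℝ) p).sub (h0.const_mul (2 * x₀))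
    exact derivCongr h (fun v => by simp; try ring)
  have h := ((((hasF_uu x₀ p).const_mul 2).mul hv).add
      (((hasF_ww D l p).const_mul (4 * (D * l - 1))).mul h0)).sub
    (((hasF_dd p).const_mul (4 * l ^ 2)).mul h0)
  exact derivCongr h (fun v => by
    simp [Q11, Q12, Q1, uu, ww, dd]; try ring)

lemma hasF_Q2 (D l x₀ : ℝ) (p : E2) :
    HasFDerivAt (Q2 D l x₀) ((Q12 D l x₀ p) • PR 0 + (Q22 D l x₀ p) • PR 1) p := by
  have h0 := hasF_coord 0 p
  have h1 := hasF_coord 1 p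
  have hm : HasFDerivAt (fun q : E2 => 2 * D * l * (q 1 + 1) - 2 * q 1)
      ((2 * D * l - 2) • PR 1) p := by
    have h := ((h1.add_const 1).const_mul (2 * D * l)).sub (h1.const_mul 2)
    exact derivCongr h (fun v => by simp; try ring)
  have h := ((((h1.add_const 1).const_mul (-(4 * x₀))).mul (hasF_uu x₀ p)).add
      (((hasF_ww D l p).const_mul 2).mul hm)).sub
    (((hasF_dd p).const_mul (4 * l ^ 2)).mul (h1.add_const 1))
  exact derivCongr h (fun v => by
    simp [Q12, Q22, Q2, uu, ww, dd]; try ring)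

lemma hasF_VV (D l x₀ : ℝ) {p : E2} (hl : l ≠ 0) (hd : dd p ≠ 0) (hQ : QQ D l x₀ p ≠ 0) :
    HasFDerivAt (VV D l x₀) ((C1 D l x₀ p) • PR 0 + (C2 D l x₀ p) • PR 1) p := by
  have h4 : (4 : ℝ) * l * dd p ≠ 0 := by
    simp [hl, hd]
  have h := ((((hasF_dd p).const_mul (4 * l)).log h4).const_mul 2).sub
    (((hasF_QQ D l x₀ p).log hQ).const_mul 2)
  exact derivCongr h (fun v => by
    simp only [ContinuousLinearMap.add_apply, ContinuousLinearMap.sub_apply,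
      ContinuousLinearMap.smul_apply, smul_eq_mul, C1, C2]
    field_simp
    ring)

lemma hasF_C1 (D l x₀ : ℝ) {p : E2} (hd : dd p ≠ 0) (hQ : QQ D l x₀ p ≠ 0) :
    HasFDerivAt (C1 D l x₀)
      (((4 * dd p - 4 * p 0 * (2 * p 0)) / dd p ^ 2
          - (2 * Q11 D l x₀ p * QQ D l x₀ p - 2 * Q1 D l x₀ p * Q1 D l x₀ p) / QQ D l x₀ p ^ 2) • PR 0 +
       ((-(4 * p 0 * (2 * (p 1 + 1)))) / dd p ^ 2
          - (2 * Q12 D l x₀ p * QQ D l x₀ p - 2 * Q1 D l x₀ p * Q2 D l x₀ p) / QQ D l x₀ p ^ 2) • PR 1) p := by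
  have h0 := hasF_coord 0 p
  have h := (hasF_div (h0.const_mul 4) (hasF_dd p) hd).sub
    (hasF_div ((hasF_Q1 D l x₀ p).const_mul 2) (hasF_QQ D l x₀ p) hQ)
  exact derivCongr h (fun v => by
    simp only [ContinuousLinearMap.add_apply, ContinuousLinearMap.sub_apply,
      ContinuousLinearMap.smul_apply, smul_eq_mul]
    field_simp
    ring)

lemma hasF_C2 (D l x₀ : ℝ) {p : E2} (hd : dd p ≠ 0) (hQ : QQ D l x₀ p ≠ 0) :
    HasFDerivAt (C2 D l x₀)
      (((-(4 * (p 1 + 1) * (2 * p 0))) / dd p ^ 2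
          - (2 * Q12 D l x₀ p * QQ D l x₀ p - 2 * Q2 D l x₀ p * Q1 D l x₀ p) / QQ D l x₀ p ^ 2) • PR 0 +
       ((4 * dd p - 4 * (p 1 + 1) * (2 * (p 1 + 1))) / dd p ^ 2
          - (2 * Q22 D l x₀ p * QQ D l x₀ p - 2 * Q2 D l x₀ p * Q2 D l x₀ p) / QQ D l x₀ p ^ 2) • PR 1) p := by
  have h1 := hasF_coord 1 p
  have h := (hasF_div ((h1.add_const 1).const_mul 4) (hasF_dd p) hd).sub
    (hasF_div ((hasF_Q2 D l x₀ p).const_mul 2) (hasF_QQ D l x₀ p) hQ)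
  exact derivCongr h (fun v => by
    simp only [ContinuousLinearMap.add_apply, ContinuousLinearMap.sub_apply,
      ContinuousLinearMap.smul_apply, smul_eq_mul]
    field_simp
    ring)

lemma bubble_eq_VV (D l x₀ : ℝ) {p : E2} (hl : l ≠ 0) (hd : dd p ≠ 0)
    (hQ : QQ D l x₀ p ≠ 0) : diskBubble D l x₀ p = VV D l x₀ p := by
  have hXc : Xc p = 2 * p 0 / dd p := rfl
  have hYc : Yc p = (1 - p 0 ^ 2 - p 1 ^ 2) / dd p := rfl
  have harg : l * (Xc p ^ 2 + (Yc p + 1) ^ 2) /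
      ((Xc p - x₀) ^ 2 + (Yc p + D * l) ^ 2 - l ^ 2) = 4 * l * dd p / QQ D l x₀ p := by
    rw [hXc, hYc]
    have hB : ((2 * p 0 / dd p - x₀) ^ 2 + ((1 - p 0 ^ 2 - p 1 ^ 2) / dd p + D * l) ^ 2
        - l ^ 2) = QQ D l x₀ p / dd p ^ 2 := by
      simp only [QQ, uu, ww]
      field_simp
    rw [hB, div_div_eq_mul_div]
    have hd' : p 0 ^ 2 + (p 1 + 1) ^ 2 ≠ 0 := hd
    have hA : l * ((2 * p 0 / dd p) ^ 2 + ((1 - p 0 ^ 2 - p 1 ^ 2) / dd p + 1) ^ 2) * dd p ^ 2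
        = 4 * l * dd p := by
      simp only [dd]
      field_simp [hd']
      ring
    rw [hA]
  rw [diskBubble, harg, VV, Real.log_div (by simp [hl, hd]) hQ]
  ring


lemma norm_sq_eq (p : E2) : ‖p‖ ^ 2 = p 0 ^ 2 + p 1 ^ 2 := by
  rw [EuclideanSpace.norm_eq, Real.sq_sqrt (by positivity)]
  simp [Fin.sum_univ_two, Real.norm_eq_abs, sq_abs]

lemma dd_nonneg (p : E2) : 0 ≤ dd p := by simp only [dd]; positivity

lemma dd_pos {p : E2} (hr : p 0 ^ 2 + p 1 ^ 2 < 1) : 0 < dd p := by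
  simp only [dd]
  have h1 : (2 * (p 1 + 1)) ^ 2 ≤ 4 * (p 0 ^ 2 + (p 1 + 1) ^ 2) := by
    nlinarith [sq_nonneg (p 0)]
  nlinarith [h1, hr, sq_nonneg (p 0), sq_nonneg (p 1 + 1)]

lemma QQ_pos (D l x₀ : ℝ) (hD : 1 < D) (hl : 0 < l) {p : E2}
    (hr : p 0 ^ 2 + p 1 ^ 2 ≤ 1) (hd0 : 0 < dd p) : 0 < QQ D l x₀ p := by
  have hw : l * dd p < ww D l p := by
    simp only [ww, dd] at *
    nlinarith [mul_pos (mul_pos (sub_pos.mpr hD) hl) hd0]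
  simp only [QQ]
  nlinarith [hw, mul_pos hl hd0, sq_nonneg (uu x₀ p)]

lemma fderiv_bubble (D l x₀ : ℝ) (hl : l ≠ 0) {q : E2} (hdq : dd q ≠ 0)
    (hQq : QQ D l x₀ q ≠ 0) :
    fderiv ℝ (diskBubble D l x₀) q = (C1 D l x₀ q) • PR 0 + (C2 D l x₀ q) • PR 1 := by
  have hev : ∀ᶠ r in nhds q, dd r ≠ 0 ∧ QQ D l x₀ r ≠ 0 :=
    ((hasF_dd q).continuousAt.eventually_ne hdq).and
      ((hasF_QQ D l x₀ q).continuousAt.eventually_ne hQq)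
  have heq : diskBubble D l x₀ =ᶠ[nhds q] VV D l x₀ :=
    hev.mono fun r hr => bubble_eq_VV D l x₀ hl hr.1 hr.2
  rw [heq.fderiv_eq, (hasF_VV D l x₀ hl hdq hQq).fderiv]

end

end DiskAux

open DiskAux in
/-- For `D > 1`, `λ > 0`, `x₀ ∈ ℝ`, the disk bubble solves `-ΔÛ = -2 e^Û` in the open
unit disk and `∂_ν Û + 2 = 2D e^{Û/2}` on the unit circle (away from the singular
point of the parametrizing formula), `∂_ν` being the outer normal derivative. -/
theorem diskBubble_solves (D l x₀ : ℝ) (hD : 1 < D) (hl : 0 < l) :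
    (∀ p : EuclideanSpace ℝ (Fin 2), ‖p‖ < 1 →
      -(lap (diskBubble D l x₀) p) = -2 * Real.exp (diskBubble D l x₀ p)) ∧
    (∀ p : EuclideanSpace ℝ (Fin 2), ‖p‖ = 1 → p 0 ^ 2 + (p 1 + 1) ^ 2 ≠ 0 →
      fderiv ℝ (diskBubble D l x₀) p p + 2 =
        2 * D * Real.exp (diskBubble D l x₀ p / 2)) := by
  have hl' : l ≠ 0 := ne_of_gt hl
  constructor
  · -- interior equation
    intro p hp
    have hr : p 0 ^ 2 + p 1 ^ 2 < 1 := by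
      rw [← norm_sq_eq p]; nlinarith [norm_nonneg p, hp]
    have hd0 : 0 < dd p := dd_pos hr
    have hQ0 : 0 < QQ D l x₀ p := QQ_pos D l x₀ hD hl hr.le hd0
    have hpos : (0:ℝ) < 4 * l * dd p := by nlinarith [mul_pos hl hd0]
    have hev : ∀ᶠ q in nhds p, dd q ≠ 0 ∧ QQ D l x₀ q ≠ 0 :=
      ((hasF_dd p).continuousAt.eventually_ne hd0.ne').and
        ((hasF_QQ D l x₀ p).continuousAt.eventually_ne hQ0.ne')
    have hW1 : (fun y => fderiv ℝ (diskBubble D l x₀) y (EuclideanSpace.single 0 1))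
        =ᶠ[nhds p] C1 D l x₀ :=
      hev.mono fun q hq => by
        show (fderiv ℝ (diskBubble D l x₀) q) (EuclideanSpace.single 0 1) = C1 D l x₀ q
        rw [fderiv_bubble D l x₀ hl' hq.1 hq.2]
        simp [PR, EuclideanSpace.single_apply]
    have hW2 : (fun y => fderiv ℝ (diskBubble D l x₀) y (EuclideanSpace.single 1 1))
        =ᶠ[nhds p] C2 D l x₀ :=
      hev.mono fun q hq => by
        show (fderiv ℝ (diskBubble D l x₀) q) (EuclideanSpace.single 1 1) = C2 D l x₀ q
        rw [fderiv_bubble D l x₀ hl' hq.1 hq.2]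
        simp [PR, EuclideanSpace.single_apply]
    have hWa : fderiv ℝ (fun y => fderiv ℝ (diskBubble D l x₀) y (EuclideanSpace.single 0 1)) p
        (EuclideanSpace.single 0 1)
        = (4 * dd p - 4 * p 0 * (2 * p 0)) / dd p ^ 2
          - (2 * Q11 D l x₀ p * QQ D l x₀ p - 2 * Q1 D l x₀ p * Q1 D l x₀ p) / QQ D l x₀ p ^ 2 := by
      rw [hW1.fderiv_eq, (hasF_C1 D l x₀ hd0.ne' hQ0.ne').fderiv]
      simp [PR, EuclideanSpace.single_apply]
    have hWb : fderiv ℝ (fun y => fderiv ℝ (diskBubble D l x₀) y (EuclideanSpace.single 1 1)) p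
        (EuclideanSpace.single 1 1)
        = (4 * dd p - 4 * (p 1 + 1) * (2 * (p 1 + 1))) / dd p ^ 2
          - (2 * Q22 D l x₀ p * QQ D l x₀ p - 2 * Q2 D l x₀ p * Q2 D l x₀ p) / QQ D l x₀ p ^ 2 := by
      rw [hW2.fderiv_eq, (hasF_C2 D l x₀ hd0.ne' hQ0.ne').fderiv]
      simp [PR, EuclideanSpace.single_apply]
    have hlap : lap (diskBubble D l x₀) p
        = ((4 * dd p - 4 * p 0 * (2 * p 0)) / dd p ^ 2
          - (2 * Q11 D l x₀ p * QQ D l x₀ p - 2 * Q1 D l x₀ p * Q1 D l x₀ p) / QQ D l x₀ p ^ 2)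
          + ((4 * dd p - 4 * (p 1 + 1) * (2 * (p 1 + 1))) / dd p ^ 2
          - (2 * Q22 D l x₀ p * QQ D l x₀ p - 2 * Q2 D l x₀ p * Q2 D l x₀ p) / QQ D l x₀ p ^ 2) := by
      rw [lap, Fin.sum_univ_two, hWa, hWb]
    have key : Q1 D l x₀ p ^ 2 + Q2 D l x₀ p ^ 2
        - QQ D l x₀ p * (Q11 D l x₀ p + Q22 D l x₀ p) = 16 * l ^ 2 * dd p ^ 2 := by
      simp only [Q1, Q2, Q11, Q22, QQ, uu, ww, dd]
      ring
    have e1 : ((4 * dd p - 4 * p 0 * (2 * p 0)) / dd p ^ 2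
          - (2 * Q11 D l x₀ p * QQ D l x₀ p - 2 * Q1 D l x₀ p * Q1 D l x₀ p) / QQ D l x₀ p ^ 2)
          + ((4 * dd p - 4 * (p 1 + 1) * (2 * (p 1 + 1))) / dd p ^ 2
          - (2 * Q22 D l x₀ p * QQ D l x₀ p - 2 * Q2 D l x₀ p * Q2 D l x₀ p) / QQ D l x₀ p ^ 2)
        = 2 * (Q1 D l x₀ p ^ 2 + Q2 D l x₀ p ^ 2
            - QQ D l x₀ p * (Q11 D l x₀ p + Q22 D l x₀ p)) / QQ D l x₀ p ^ 2 := by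
      field_simp [hd0.ne', hQ0.ne']
      simp only [dd]
      ring
    have hexp : Real.exp (diskBubble D l x₀ p) = (4 * l * dd p) ^ 2 / QQ D l x₀ p ^ 2 := by
      rw [bubble_eq_VV D l x₀ hl' hd0.ne' hQ0.ne', VV]
      rw [show (2:ℝ) * Real.log (4 * l * dd p) = Real.log ((4 * l * dd p) ^ 2) by
        rw [Real.log_pow]; push_cast; ring]
      rw [show (2:ℝ) * Real.log (QQ D l x₀ p) = Real.log (QQ D l x₀ p ^ 2) by
        rw [Real.log_pow]; push_cast; ring]
      rw [← Real.log_div (by positivity) (by positivity),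
        Real.exp_log (div_pos (by positivity) (by positivity))]
    rw [hlap, e1, key, hexp]
    ring
  · -- boundary equation
    intro p hp hdne
    have hr : p 0 ^ 2 + p 1 ^ 2 = 1 := by rw [← norm_sq_eq p, hp]; norm_num
    have hd' : dd p ≠ 0 := hdne
    have hd0 : 0 < dd p := lt_of_le_of_ne (dd_nonneg p) (Ne.symm hd')
    have hQ0 : 0 < QQ D l x₀ p := QQ_pos D l x₀ hD hl hr.le hd0
    have hpos : (0:ℝ) < 4 * l * dd p := by nlinarith [mul_pos hl hd0]
    have hfd : fderiv ℝ (diskBubble D l x₀) p p = C1 D l x₀ p * p 0 + C2 D l x₀ p * p 1 := by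
      rw [fderiv_bubble D l x₀ hl' hd' hQ0.ne']
      simp [PR]
    have hexp : Real.exp (diskBubble D l x₀ p / 2) = 4 * l * dd p / QQ D l x₀ p := by
      rw [bubble_eq_VV D l x₀ hl' hd' hQ0.ne', VV]
      rw [show (2 * Real.log (4 * l * dd p) - 2 * Real.log (QQ D l x₀ p)) / 2
          = Real.log (4 * l * dd p) - Real.log (QQ D l x₀ p) by ring]
      rw [← Real.log_div hpos.ne' hQ0.ne', Real.exp_log (div_pos hpos hQ0)]
    have key2 : (4 * p 0 * p 0 + 4 * (p 1 + 1) * p 1 + 2 * dd p) * QQ D l x₀ p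
        - (2 * Q1 D l x₀ p * p 0 + 2 * Q2 D l x₀ p * p 1) * dd p
        = 8 * D * l * dd p ^ 2 := by
      simp only [Q1, Q2, QQ, uu, ww, dd]
      linear_combination (-2 * (1 + x₀ ^ 2 - l ^ 2 - 2 * D * l + D ^ 2 * l ^ 2)
        * (p 0 ^ 2 + (p 1 + 1) ^ 2) ^ 2) * hr
    have e2 : C1 D l x₀ p * p 0 + C2 D l x₀ p * p 1 + 2
        = ((4 * p 0 * p 0 + 4 * (p 1 + 1) * p 1 + 2 * dd p) * QQ D l x₀ p
            - (2 * Q1 D l x₀ p * p 0 + 2 * Q2 D l x₀ p * p 1) * dd p) / (dd p * QQ D l x₀ p) := by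
      simp only [C1, C2]
      field_simp
      ring
    rw [hfd, hexp, e2, key2]
    field_simp
    ring
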